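/- arXiv:2409.19797 — 3 statements merged into one kernel-verified Lean document; each statement's English description precedes it below -/
import Mathlib

section
/- For every k ∈ {7, 16, 20, 22} and every connected simple graph G on vertex set {1,…,n} with n ≥ 3, the dynamical Lie algebras of G and of the complete graph coincide: 𝔞_k^G = 𝔞_k^{K_n} (i.e., G ∼_k K_n). -/
open Matrix DirectSum

attribute [local instance 100] LieRing.ofAssociativeRing

noncomputable section

/-- The identity Pauli matrix `I`. -/
def PauliI : Matrix (Fin 2) (Fin 2) ℂ := 1

/-- The Pauli matrix `X`. -/
def PauliX : Matrix (Fin 2) (Fin 2) ℂ := !![0, 1; 1, 0]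

/-- The Pauli matrix `Y`. -/
def PauliY : Matrix (Fin 2) (Fin 2) ℂ := !![0, -Complex.I; Complex.I, 0]

/-- The Pauli matrix `Z`. -/
def PauliZ : Matrix (Fin 2) (Fin 2) ℂ := !![1, 0; 0, -1]

/-- The `n`-fold Kronecker product of the 2×2 matrices `A 0, …, A (n-1)`, realized as a
matrix indexed by `Fin n → Fin 2` (a type of cardinality `2^n`). -/
def pauliString {n : ℕ} (A : Fin n → Matrix (Fin 2) (Fin 2) ℂ) :
    Matrix (Fin n → Fin 2) (Fin n → Fin 2) ℂ :=
  Matrix.of fun x y => ∏ k, A k (x k) (y k)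

/-- The Pauli string `A_i B_j` with `A` at site `i`, `B` at site `j`, and identity elsewhere. -/
def twoLocal {n : ℕ} (A B : Matrix (Fin 2) (Fin 2) ℂ) (i j : Fin n) :
    Matrix (Fin n → Fin 2) (Fin n → Fin 2) ℂ :=
  pauliString (fun k => if k = i then A else if k = j then B else PauliI)

/-- The Pauli string `A_i` with `A` at site `i` and identity elsewhere. -/
def oneLocal {n : ℕ} (A : Matrix (Fin 2) (Fin 2) ℂ) (i : Fin n) :
    Matrix (Fin n → Fin 2) (Fin n → Fin 2) ℂ :=
  pauliString (fun k => if k = i then A else PauliI)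

/-- The generating sets `𝒜_k` (a pair `(a, b)` stands for `a ⊗ b`). -/
def genSet : ℕ → Set (Matrix (Fin 2) (Fin 2) ℂ × Matrix (Fin 2) (Fin 2) ℂ)
  | 2 => {(PauliX, PauliY), (PauliY, PauliX)}
  | 4 => {(PauliX, PauliX), (PauliY, PauliY)}
  | 6 => {(PauliX, PauliX), (PauliY, PauliZ), (PauliZ, PauliY)}
  | 7 => {(PauliX, PauliX), (PauliY, PauliY), (PauliZ, PauliZ)}
  | 14 => {(PauliX, PauliX), (PauliY, PauliY), (PauliX, PauliY), (PauliY, PauliX)}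
  | 16 => {(PauliX, PauliY), (PauliY, PauliX), (PauliY, PauliZ), (PauliZ, PauliY)}
  | 20 => {(PauliX, PauliX), (PauliY, PauliY), (PauliY, PauliZ), (PauliZ, PauliY)}
  | 22 => {(PauliX, PauliX), (PauliX, PauliY), (PauliY, PauliX), (PauliX, PauliZ), (PauliZ, PauliX)}
  | _ => ∅

/-- The dynamical Lie algebra `𝔞_k^G`: the smallest real Lie subalgebra of the `2^n × 2^n`
complex matrices containing `i·(a_i · b_j)` for every edge `{i, j}` of `G` and every pair
`(a, b)` with `a ⊗ b ∈ 𝒜_k`. -/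
def dla (k : ℕ) {n : ℕ} (G : SimpleGraph (Fin n)) :
    LieSubalgebra ℝ (Matrix (Fin n → Fin 2) (Fin n → Fin 2) ℂ) :=
  LieSubalgebra.lieSpan ℝ _
    {M | ∃ i j : Fin n, G.Adj i j ∧ ∃ p ∈ genSet k, M = Complex.I • twoLocal p.1 p.2 i j}

/-! ### Auxiliary material -/

abbrev M2 := Matrix (Fin 2) (Fin 2) ℂ

/-! #### 2×2 Pauli algebra -/

lemma PauliI_mul (A : M2) : PauliI * A = A := by simp [PauliI]
lemma mul_PauliI (A : M2) : A * PauliI = A := by simp [PauliI]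

lemma sqX : PauliX * PauliX = PauliI := by
  ext a b; fin_cases a <;> fin_cases b <;>
    simp [PauliI, PauliX, Matrix.mul_apply, Fin.sum_univ_two, Matrix.one_apply]

lemma sqY : PauliY * PauliY = PauliI := by
  ext a b; fin_cases a <;> fin_cases b <;>
    simp [PauliI, PauliY, Matrix.mul_apply, Fin.sum_univ_two, Matrix.one_apply]

lemma sqZ : PauliZ * PauliZ = PauliI := by
  ext a b; fin_cases a <;> fin_cases b <;>
    simp [PauliI, PauliZ, Matrix.mul_apply, Fin.sum_univ_two, Matrix.one_apply]

lemma comXY : PauliX * PauliY - PauliY * PauliX = (((2:ℂ)) * Complex.I) • PauliZ := by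
  ext a b; fin_cases a <;> fin_cases b <;>
    simp [PauliX, PauliY, PauliZ, Matrix.mul_apply, Fin.sum_univ_two] <;> ring

lemma comYX : PauliY * PauliX - PauliX * PauliY = (((-2:ℂ)) * Complex.I) • PauliZ := by
  rw [← neg_sub (PauliX * PauliY) (PauliY * PauliX), comXY, ← neg_smul]
  congr 1; ring

lemma comYZ : PauliY * PauliZ - PauliZ * PauliY = (((2:ℂ)) * Complex.I) • PauliX := by
  ext a b; fin_cases a <;> fin_cases b <;>
    simp [PauliX, PauliY, PauliZ, Matrix.mul_apply, Fin.sum_univ_two] <;>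
    ring_nf <;> simp [Complex.I_sq]

lemma comZY : PauliZ * PauliY - PauliY * PauliZ = (((-2:ℂ)) * Complex.I) • PauliX := by
  rw [← neg_sub (PauliY * PauliZ) (PauliZ * PauliY), comYZ, ← neg_smul]
  congr 1; ring

lemma comZX : PauliZ * PauliX - PauliX * PauliZ = (((2:ℂ)) * Complex.I) • PauliY := by
  ext a b; fin_cases a <;> fin_cases b <;>
    simp [PauliX, PauliY, PauliZ, Matrix.mul_apply, Fin.sum_univ_two] <;>
    ring_nf <;> simp [Complex.I_sq]

lemma comXZ : PauliX * PauliZ - PauliZ * PauliX = (((-2:ℂ)) * Complex.I) • PauliY := by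
  rw [← neg_sub (PauliZ * PauliX) (PauliX * PauliZ), comZX, ← neg_smul]
  congr 1; ring

/-! #### Pauli string lemmas -/

lemma pauliString_mul {n : ℕ} (A B : Fin n → M2) :
    pauliString A * pauliString B = pauliString (fun k => A k * B k) := by
  ext x y
  simp only [pauliString, Matrix.mul_apply, Matrix.of_apply]
  rw [Finset.prod_univ_sum]
  simp [Fintype.piFinset_univ, ← Finset.prod_mul_distrib]

lemma pauliString_smul_of {n : ℕ} (A B : Fin n → M2) (i : Fin n) (c : ℂ)
    (h : A i = c • B i) (h' : ∀ k, k ≠ i → A k = B k) :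
    pauliString A = c • pauliString B := by
  ext x y
  simp only [pauliString, Matrix.of_apply, Matrix.smul_apply, smul_eq_mul]
  rw [← Finset.mul_prod_erase Finset.univ (fun k => A k (x k) (y k)) (Finset.mem_univ i),
      ← Finset.mul_prod_erase Finset.univ (fun k => B k (x k) (y k)) (Finset.mem_univ i)]
  have hp : (∏ k ∈ Finset.univ.erase i, A k (x k) (y k))
      = ∏ k ∈ Finset.univ.erase i, B k (x k) (y k) :=
    Finset.prod_congr rfl (fun k hk => by rw [h' k (Finset.ne_of_mem_erase hk)])
  rw [hp, h]
  simp [mul_assoc]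

lemma pauliString_sub_of {n : ℕ} (A B C : Fin n → M2) (i : Fin n)
    (h : A i = B i - C i) (hB : ∀ k, k ≠ i → A k = B k) (hC : ∀ k, k ≠ i → A k = C k) :
    pauliString A = pauliString B - pauliString C := by
  ext x y
  simp only [pauliString, Matrix.of_apply, Matrix.sub_apply]
  rw [← Finset.mul_prod_erase Finset.univ (fun k => A k (x k) (y k)) (Finset.mem_univ i),
      ← Finset.mul_prod_erase Finset.univ (fun k => B k (x k) (y k)) (Finset.mem_univ i),
      ← Finset.mul_prod_erase Finset.univ (fun k => C k (x k) (y k)) (Finset.mem_univ i)]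
  have hpB : (∏ k ∈ Finset.univ.erase i, B k (x k) (y k))
      = ∏ k ∈ Finset.univ.erase i, A k (x k) (y k) :=
    Finset.prod_congr rfl (fun k hk => by rw [hB k (Finset.ne_of_mem_erase hk)])
  have hpC : (∏ k ∈ Finset.univ.erase i, C k (x k) (y k))
      = ∏ k ∈ Finset.univ.erase i, A k (x k) (y k) :=
    Finset.prod_congr rfl (fun k hk => by rw [hC k (Finset.ne_of_mem_erase hk)])
  rw [hpB, hpC, h, Matrix.sub_apply, sub_mul]

/-! #### Three-site chains -/

/-- The Pauli string with `A` at `i`, `B` at `j`, `C` at `l`, identity elsewhere. -/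
def chain3 {n : ℕ} (i j l : Fin n) (A B C : M2) :
    Matrix (Fin n → Fin 2) (Fin n → Fin 2) ℂ :=
  pauliString (fun k => if k = i then A else if k = j then B else if k = l then C else PauliI)

section chains

variable {n : ℕ} {i j l : Fin n}

lemma chain3_mul (A B C A' B' C' : M2) :
    chain3 i j l A B C * chain3 i j l A' B' C'
      = chain3 i j l (A * A') (B * B') (C * C') := by
  rw [chain3, chain3, chain3, pauliString_mul]
  exact congrArg pauliString (funext fun k => by split_ifs <;> simp [PauliI])

lemma twoLocal_eq_chain12 (hli : l ≠ i) (hlj : l ≠ j) (A B : M2) :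
    twoLocal A B i j = chain3 i j l A B PauliI := by
  rw [twoLocal, chain3]
  exact congrArg pauliString (funext fun k => by split_ifs <;> rfl)

lemma twoLocal_eq_chain23 (hji : j ≠ i) (hli : l ≠ i) (hlj : l ≠ j) (C D : M2) :
    twoLocal C D j l = chain3 i j l PauliI C D := by
  rw [twoLocal, chain3]
  refine congrArg pauliString (funext fun k => ?_)
  by_cases h1 : k = i
  · subst h1; simp [hji.symm, hli.symm]
  · simp [h1]

lemma twoLocal_eq_chain13 (hji : j ≠ i) (hjl : j ≠ l) (A W : M2) :
    twoLocal A W i l = chain3 i j l A PauliI W := by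
  rw [twoLocal, chain3]
  refine congrArg pauliString (funext fun k => ?_)
  by_cases h1 : k = i
  · simp [h1]
  · by_cases h2 : k = j
    · subst h2; simp [h1, hjl]
    · simp [h1, h2]

lemma chain3_smul2 (hji : j ≠ i) (A B C : M2) (c : ℂ) :
    chain3 i j l A (c • B) C = c • chain3 i j l A B C := by
  apply pauliString_smul_of _ _ j
  · simp [hji]
  · intro k hk; simp [hk]

lemma chain3_smul3 (hli : l ≠ i) (hlj : l ≠ j) (A B C : M2) (c : ℂ) :
    chain3 i j l A B (c • C) = c • chain3 i j l A B C := by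
  apply pauliString_smul_of _ _ l
  · simp [hli, hlj]
  · intro k hk; simp [hk]

lemma chain3_sub2 (hji : j ≠ i) (A B B' C : M2) :
    chain3 i j l A (B - B') C = chain3 i j l A B C - chain3 i j l A B' C := by
  apply pauliString_sub_of _ _ _ j
  · simp [hji]
  · intro k hk; simp [hk]
  · intro k hk; simp [hk]

lemma chain3_sub3 (hli : l ≠ i) (hlj : l ≠ j) (A B C C' : M2) :
    chain3 i j l A B (C - C') = chain3 i j l A B C - chain3 i j l A B C' := by
  apply pauliString_sub_of _ _ _ l
  · simp [hli, hlj]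
  · intro k hk; simp [hk]
  · intro k hk; simp [hk]

lemma twoLocal_swap (hij : i ≠ j) (A B : M2) :
    twoLocal A B i j = twoLocal B A j i := by
  rw [twoLocal, twoLocal]
  refine congrArg pauliString (funext fun k => ?_)
  by_cases h1 : k = i
  · subst h1; simp [hij]
  · by_cases h2 : k = j
    · subst h2; simp [h1, Ne.symm hij]
    · simp [h1, h2]

end chains

/-! #### The key double-bracket identities -/

section key

variable {n : ℕ} {i j l : Fin n}

lemma key_bracket (hij : i ≠ j) (hjl : j ≠ l) (hil : i ≠ l)
    (A B C D E D' W : M2) (s t : ℂ)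
    (hBC : B * C - C * B = (s * Complex.I) • E)
    (hDD' : D * D' - D' * D = (t * Complex.I) • W)
    (hEE : E * E = PauliI) :
    ⁅⁅Complex.I • twoLocal A B i j, Complex.I • twoLocal C D j l⁆,
        Complex.I • twoLocal E D' j l⁆
      = (s * t) • (Complex.I • twoLocal A W i l) := by
  have hji : j ≠ i := hij.symm
  have hli : l ≠ i := hil.symm
  have hlj : l ≠ j := hjl.symm
  have e1 : twoLocal A B i j = chain3 i j l A B PauliI := twoLocal_eq_chain12 hli hlj A B
  have e2 : twoLocal C D j l = chain3 i j l PauliI C D := twoLocal_eq_chain23 hji hli hlj C D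
  have e3 : twoLocal E D' j l = chain3 i j l PauliI E D' := twoLocal_eq_chain23 hji hli hlj E D'
  have e4 : twoLocal A W i l = chain3 i j l A PauliI W := twoLocal_eq_chain13 hji hjl A W
  have inner : ⁅Complex.I • twoLocal A B i j, Complex.I • twoLocal C D j l⁆
      = (Complex.I * (Complex.I * (s * Complex.I))) • chain3 i j l A E D := by
    rw [e1, e2, lie_smul, smul_lie, Ring.lie_def, chain3_mul, chain3_mul,
        mul_PauliI, PauliI_mul, mul_PauliI, PauliI_mul,
        ← chain3_sub2 hji, hBC, chain3_smul2 hji]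
    simp only [smul_smul]
  rw [inner, e3, lie_smul, smul_lie, Ring.lie_def, chain3_mul, chain3_mul,
      mul_PauliI, PauliI_mul, hEE, ← chain3_sub3 hli hlj, hDD', chain3_smul3 hli hlj,
      ← e4]
  simp only [smul_smul]
  congr 1
  linear_combination (s * t * Complex.I * (Complex.I * Complex.I - 1)) * Complex.I_mul_I

lemma key_bracket' (hij : i ≠ j) (hjl : j ≠ l) (hil : i ≠ l)
    (A B C D E C' W : M2) (s t : ℂ)
    (hBC : B * C - C * B = (s * Complex.I) • E)
    (hEC' : E * C' - C' * E = (t * Complex.I) • W)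
    (hDD : D * D = PauliI) :
    ⁅⁅Complex.I • twoLocal A B i j, Complex.I • twoLocal C D j l⁆,
        Complex.I • twoLocal C' D j l⁆
      = (s * t) • (Complex.I • twoLocal A W i j) := by
  have hji : j ≠ i := hij.symm
  have hli : l ≠ i := hil.symm
  have hlj : l ≠ j := hjl.symm
  have e1 : twoLocal A B i j = chain3 i j l A B PauliI := twoLocal_eq_chain12 hli hlj A B
  have e2 : twoLocal C D j l = chain3 i j l PauliI C D := twoLocal_eq_chain23 hji hli hlj C D
  have e3 : twoLocal C' D j l = chain3 i j l PauliI C' D := twoLocal_eq_chain23 hji hli hlj C' D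
  have e4 : twoLocal A W i j = chain3 i j l A W PauliI := twoLocal_eq_chain12 hli hlj A W
  have inner : ⁅Complex.I • twoLocal A B i j, Complex.I • twoLocal C D j l⁆
      = (Complex.I * (Complex.I * (s * Complex.I))) • chain3 i j l A E D := by
    rw [e1, e2, lie_smul, smul_lie, Ring.lie_def, chain3_mul, chain3_mul,
        mul_PauliI, PauliI_mul, mul_PauliI, PauliI_mul,
        ← chain3_sub2 hji, hBC, chain3_smul2 hji]
    simp only [smul_smul]
  rw [inner, e3, lie_smul, smul_lie, Ring.lie_def, chain3_mul, chain3_mul,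
      mul_PauliI, PauliI_mul, hDD, ← chain3_sub2 hji, hEC', chain3_smul2 hji,
      ← e4]
  simp only [smul_smul]
  congr 1
  linear_combination (s * t * Complex.I * (Complex.I * Complex.I - 1)) * Complex.I_mul_I

end key

/-! #### Membership steps -/

section steps

variable {n : ℕ} (K : LieSubalgebra ℝ (Matrix (Fin n → Fin 2) (Fin n → Fin 2) ℂ))

lemma coe_smul_mat (r : ℝ) (M : Matrix (Fin n → Fin 2) (Fin n → Fin 2) ℂ) :
    ((r : ℂ)) • M = r • M := by
  rw [show ((r : ℂ)) = algebraMap ℝ ℂ r from rfl, algebraMap_smul]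

lemma step_mem {i j l : Fin n} (hij : i ≠ j) (hjl : j ≠ l) (hil : i ≠ l)
    (A B C D E D' W : M2) (s t : ℂ) (r : ℝ) (hr : r ≠ 0) (hst : s * t = (r : ℂ))
    (hBC : B * C - C * B = (s * Complex.I) • E)
    (hDD' : D * D' - D' * D = (t * Complex.I) • W)
    (hEE : E * E = PauliI)
    (m1 : Complex.I • twoLocal A B i j ∈ K) (m2 : Complex.I • twoLocal C D j l ∈ K)
    (m3 : Complex.I • twoLocal E D' j l ∈ K) :
    Complex.I • twoLocal A W i l ∈ K := by
  have h := K.lie_mem (K.lie_mem m1 m2) m3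
  rw [key_bracket hij hjl hil A B C D E D' W s t hBC hDD' hEE, hst, coe_smul_mat] at h
  have h2 := K.smul_mem r⁻¹ h
  rwa [inv_smul_smul₀ hr] at h2

lemma step_mem' {i j l : Fin n} (hij : i ≠ j) (hjl : j ≠ l) (hil : i ≠ l)
    (A B C D E C' W : M2) (s t : ℂ) (r : ℝ) (hr : r ≠ 0) (hst : s * t = (r : ℂ))
    (hBC : B * C - C * B = (s * Complex.I) • E)
    (hEC' : E * C' - C' * E = (t * Complex.I) • W)
    (hDD : D * D = PauliI)
    (m1 : Complex.I • twoLocal A B i j ∈ K) (m2 : Complex.I • twoLocal C D j l ∈ K)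
    (m3 : Complex.I • twoLocal C' D j l ∈ K) :
    Complex.I • twoLocal A W i j ∈ K := by
  have h := K.lie_mem (K.lie_mem m1 m2) m3
  rw [key_bracket' hij hjl hil A B C D E C' W s t hBC hEC' hDD, hst, coe_smul_mat] at h
  have h2 := K.smul_mem r⁻¹ h
  rwa [inv_smul_smul₀ hr] at h2

lemma step7 {i j l : Fin n} (hij : i ≠ j) (hjl : j ≠ l) (hil : i ≠ l)
    (h1 : ∀ p ∈ genSet 7, Complex.I • twoLocal p.1 p.2 i j ∈ K)
    (h2 : ∀ p ∈ genSet 7, Complex.I • twoLocal p.1 p.2 j l ∈ K) :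
    ∀ p ∈ genSet 7, Complex.I • twoLocal p.1 p.2 i l ∈ K := by
  have gXX1 := h1 (PauliX, PauliX) (Or.inl rfl)
  have gYY1 := h1 (PauliY, PauliY) (Or.inr (Or.inl rfl))
  have gZZ1 := h1 (PauliZ, PauliZ) (Or.inr (Or.inr rfl))
  have gXX2 := h2 (PauliX, PauliX) (Or.inl rfl)
  have gYY2 := h2 (PauliY, PauliY) (Or.inr (Or.inl rfl))
  have gZZ2 := h2 (PauliZ, PauliZ) (Or.inr (Or.inr rfl))
  intro p hp
  have hp' : p = (PauliX, PauliX) ∨ p = (PauliY, PauliY) ∨ p = (PauliZ, PauliZ) := hp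
  rcases hp' with h|h|h <;> subst h
  · exact step_mem K hij hjl hil PauliX PauliX PauliY PauliY PauliZ PauliZ PauliX
      2 2 4 (by norm_num) (by norm_num) comXY comYZ sqZ gXX1 gYY2 gZZ2
  · exact step_mem K hij hjl hil PauliY PauliY PauliX PauliX PauliZ PauliZ PauliY
      (-2) (-2) 4 (by norm_num) (by norm_num) comYX comXZ sqZ gYY1 gXX2 gZZ2
  · exact step_mem K hij hjl hil PauliZ PauliZ PauliX PauliX PauliY PauliY PauliZ
      2 2 4 (by norm_num) (by norm_num) comZX comXY sqY gZZ1 gXX2 gYY2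

lemma step16 {i j l : Fin n} (hij : i ≠ j) (hjl : j ≠ l) (hil : i ≠ l)
    (h1 : ∀ p ∈ genSet 16, Complex.I • twoLocal p.1 p.2 i j ∈ K)
    (h2 : ∀ p ∈ genSet 16, Complex.I • twoLocal p.1 p.2 j l ∈ K) :
    ∀ p ∈ genSet 16, Complex.I • twoLocal p.1 p.2 i l ∈ K := by
  have gXY1 := h1 (PauliX, PauliY) (Or.inl rfl)
  have gYX1 := h1 (PauliY, PauliX) (Or.inr (Or.inl rfl))
  have gYZ1 := h1 (PauliY, PauliZ) (Or.inr (Or.inr (Or.inl rfl)))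
  have gZY1 := h1 (PauliZ, PauliY) (Or.inr (Or.inr (Or.inr rfl)))
  have gXY2 := h2 (PauliX, PauliY) (Or.inl rfl)
  have gYX2 := h2 (PauliY, PauliX) (Or.inr (Or.inl rfl))
  have gYZ2 := h2 (PauliY, PauliZ) (Or.inr (Or.inr (Or.inl rfl)))
  have gZY2 := h2 (PauliZ, PauliY) (Or.inr (Or.inr (Or.inr rfl)))
  -- swapped-orientation versions
  have gYX1' : Complex.I • twoLocal PauliY PauliX j i ∈ K := by
    rwa [twoLocal_swap hij] at gXY1
  have gXY1' : Complex.I • twoLocal PauliX PauliY j i ∈ K := by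
    rwa [twoLocal_swap hij] at gYX1
  have gZY1' : Complex.I • twoLocal PauliZ PauliY j i ∈ K := by
    rwa [twoLocal_swap hij] at gYZ1
  have gYZ1' : Complex.I • twoLocal PauliY PauliZ j i ∈ K := by
    rwa [twoLocal_swap hij] at gZY1
  have gYX2' : Complex.I • twoLocal PauliY PauliX l j ∈ K := by
    rwa [twoLocal_swap hjl] at gXY2
  have gXY2' : Complex.I • twoLocal PauliX PauliY l j ∈ K := by
    rwa [twoLocal_swap hjl] at gYX2
  intro p hp
  have hp' : p = (PauliX, PauliY) ∨ p = (PauliY, PauliX) ∨ p = (PauliY, PauliZ)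
      ∨ p = (PauliZ, PauliY) := hp
  rcases hp' with h|h|h|h <;> subst h
  · -- (X,Y) on (i,l), via (Y,X) on (l,i)
    rw [show (Complex.I • twoLocal PauliX PauliY i l : Matrix _ _ ℂ)
        = Complex.I • twoLocal PauliY PauliX l i from by rw [twoLocal_swap hil]]
    exact step_mem K hjl.symm hij.symm hil.symm PauliY PauliX PauliY PauliZ PauliZ PauliY
      PauliX 2 (-2) (-4) (by norm_num) (by norm_num) comXY comZY sqZ gYX2' gYZ1' gZY1'
  · exact step_mem K hij hjl hil PauliY PauliX PauliY PauliZ PauliZ PauliY PauliX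
      2 (-2) (-4) (by norm_num) (by norm_num) comXY comZY sqZ gYX1 gYZ2 gZY2
  · exact step_mem K hij hjl hil PauliY PauliX PauliY PauliX PauliZ PauliY PauliZ
      2 2 4 (by norm_num) (by norm_num) comXY comXY sqZ gYX1 gYX2 gZY2
  · -- (Z,Y) on (i,l), via (Y,Z) on (l,i)
    rw [show (Complex.I • twoLocal PauliZ PauliY i l : Matrix _ _ ℂ)
        = Complex.I • twoLocal PauliY PauliZ l i from by rw [twoLocal_swap hil]]
    exact step_mem K hjl.symm hij.symm hil.symm PauliY PauliX PauliY PauliX PauliZ PauliY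
      PauliZ 2 2 4 (by norm_num) (by norm_num) comXY comXY sqZ gYX2' gYX1' gZY1'

lemma step20 {i j l : Fin n} (hij : i ≠ j) (hjl : j ≠ l) (hil : i ≠ l)
    (h1 : ∀ p ∈ genSet 20, Complex.I • twoLocal p.1 p.2 i j ∈ K)
    (h2 : ∀ p ∈ genSet 20, Complex.I • twoLocal p.1 p.2 j l ∈ K) :
    ∀ p ∈ genSet 20, Complex.I • twoLocal p.1 p.2 i l ∈ K := by
  have gXX1 := h1 (PauliX, PauliX) (Or.inl rfl)
  have gYY1 := h1 (PauliY, PauliY) (Or.inr (Or.inl rfl))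
  have gYZ1 := h1 (PauliY, PauliZ) (Or.inr (Or.inr (Or.inl rfl)))
  have gZY1 := h1 (PauliZ, PauliY) (Or.inr (Or.inr (Or.inr rfl)))
  have gXX2 := h2 (PauliX, PauliX) (Or.inl rfl)
  have gYY2 := h2 (PauliY, PauliY) (Or.inr (Or.inl rfl))
  have gYZ2 := h2 (PauliY, PauliZ) (Or.inr (Or.inr (Or.inl rfl)))
  have gZY2 := h2 (PauliZ, PauliY) (Or.inr (Or.inr (Or.inr rfl)))
  have gXX1' : Complex.I • twoLocal PauliX PauliX j i ∈ K := by
    rwa [twoLocal_swap hij] at gXX1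
  have gZY1' : Complex.I • twoLocal PauliZ PauliY j i ∈ K := by
    rwa [twoLocal_swap hij] at gYZ1
  have gYY2' : Complex.I • twoLocal PauliY PauliY l j ∈ K := by
    rwa [twoLocal_swap hjl] at gYY2
  intro p hp
  have hp' : p = (PauliX, PauliX) ∨ p = (PauliY, PauliY) ∨ p = (PauliY, PauliZ)
      ∨ p = (PauliZ, PauliY) := hp
  rcases hp' with h|h|h|h <;> subst h
  · exact step_mem K hij hjl hil PauliX PauliX PauliY PauliZ PauliZ PauliY PauliX
      2 (-2) (-4) (by norm_num) (by norm_num) comXY comZY sqZ gXX1 gYZ2 gZY2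
  · exact step_mem K hij hjl hil PauliY PauliZ PauliX PauliX PauliY PauliZ PauliY
      2 (-2) (-4) (by norm_num) (by norm_num) comZX comXZ sqY gYZ1 gXX2 gYZ2
  · exact step_mem K hij hjl hil PauliY PauliY PauliX PauliX PauliZ PauliY PauliZ
      (-2) 2 (-4) (by norm_num) (by norm_num) comYX comXY sqZ gYY1 gXX2 gZY2
  · -- (Z,Y) on (i,l), via (Y,Z) on (l,i)
    rw [show (Complex.I • twoLocal PauliZ PauliY i l : Matrix _ _ ℂ)
        = Complex.I • twoLocal PauliY PauliZ l i from by rw [twoLocal_swap hil]]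
    exact step_mem K hjl.symm hij.symm hil.symm PauliY PauliY PauliX PauliX PauliZ PauliY
      PauliZ (-2) 2 (-4) (by norm_num) (by norm_num) comYX comXY sqZ gYY2' gXX1' gZY1'

lemma step22 {i j l : Fin n} (hij : i ≠ j) (hjl : j ≠ l) (hil : i ≠ l)
    (h1 : ∀ p ∈ genSet 22, Complex.I • twoLocal p.1 p.2 i j ∈ K)
    (h2 : ∀ p ∈ genSet 22, Complex.I • twoLocal p.1 p.2 j l ∈ K) :
    ∀ p ∈ genSet 22, Complex.I • twoLocal p.1 p.2 i l ∈ K := by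
  have gXX1 := h1 (PauliX, PauliX) (Or.inl rfl)
  have gXY1 := h1 (PauliX, PauliY) (Or.inr (Or.inl rfl))
  have gYX1 := h1 (PauliY, PauliX) (Or.inr (Or.inr (Or.inl rfl)))
  have gXZ1 := h1 (PauliX, PauliZ) (Or.inr (Or.inr (Or.inr (Or.inl rfl))))
  have gZX1 := h1 (PauliZ, PauliX) (Or.inr (Or.inr (Or.inr (Or.inr rfl))))
  have gXX2 := h2 (PauliX, PauliX) (Or.inl rfl)
  have gXY2 := h2 (PauliX, PauliY) (Or.inr (Or.inl rfl))
  have gYX2 := h2 (PauliY, PauliX) (Or.inr (Or.inr (Or.inl rfl)))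
  have gXZ2 := h2 (PauliX, PauliZ) (Or.inr (Or.inr (Or.inr (Or.inl rfl))))
  have gZX2 := h2 (PauliZ, PauliX) (Or.inr (Or.inr (Or.inr (Or.inr rfl))))
  have gZX1' : Complex.I • twoLocal PauliZ PauliX j i ∈ K := by
    rwa [twoLocal_swap hij] at gXZ1
  have gXZ1' : Complex.I • twoLocal PauliX PauliZ j i ∈ K := by
    rwa [twoLocal_swap hij] at gZX1
  have gXY1' : Complex.I • twoLocal PauliX PauliY j i ∈ K := by
    rwa [twoLocal_swap hij] at gYX1
  have gXY2' : Complex.I • twoLocal PauliX PauliY l j ∈ K := by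
    rwa [twoLocal_swap hjl] at gYX2
  have gYX2' : Complex.I • twoLocal PauliY PauliX l j ∈ K := by
    rwa [twoLocal_swap hjl] at gXY2
  have gXX2' : Complex.I • twoLocal PauliX PauliX l j ∈ K := by
    rwa [twoLocal_swap hjl] at gXX2
  -- first derive (X,Y) on (i,l)
  have mXYil : Complex.I • twoLocal PauliX PauliY i l ∈ K :=
    step_mem K hij hjl hil PauliX PauliY PauliX PauliZ PauliZ PauliX PauliY
      (-2) 2 (-4) (by norm_num) (by norm_num) comYX comZX sqZ gXY1 gXZ2 gZX2
  intro p hp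
  have hp' : p = (PauliX, PauliX) ∨ p = (PauliX, PauliY) ∨ p = (PauliY, PauliX)
      ∨ p = (PauliX, PauliZ) ∨ p = (PauliZ, PauliX) := hp
  rcases hp' with h|h|h|h|h <;> subst h
  · -- (X,X) on (i,l) via key_bracket' on (i, l, j)
    exact step_mem' K hil hjl.symm hij PauliX PauliY PauliX PauliX PauliZ PauliY PauliX
      (-2) (-2) 4 (by norm_num) (by norm_num) comYX comZY sqX mXYil gXX2' gYX2'
  · exact mXYil
  · -- (Y,X) on (i,l) via (X,Y) on (l,i)
    rw [show (Complex.I • twoLocal PauliY PauliX i l : Matrix _ _ ℂ)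
        = Complex.I • twoLocal PauliX PauliY l i from by rw [twoLocal_swap hil]]
    exact step_mem K hjl.symm hij.symm hil.symm PauliX PauliY PauliX PauliZ PauliZ PauliX
      PauliY (-2) 2 (-4) (by norm_num) (by norm_num) comYX comZX sqZ gXY2' gXZ1' gZX1'
  · exact step_mem K hij hjl hil PauliX PauliY PauliX PauliY PauliZ PauliX PauliZ
      (-2) (-2) 4 (by norm_num) (by norm_num) comYX comYX sqZ gXY1 gXY2 gZX2
  · -- (Z,X) on (i,l) via (X,Z) on (l,i)
    rw [show (Complex.I • twoLocal PauliZ PauliX i l : Matrix _ _ ℂ)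
        = Complex.I • twoLocal PauliX PauliZ l i from by rw [twoLocal_swap hil]]
    exact step_mem K hjl.symm hij.symm hil.symm PauliX PauliY PauliX PauliY PauliZ PauliX
      PauliZ (-2) (-2) 4 (by norm_num) (by norm_num) comYX comYX sqZ gXY2' gXY1' gZX1'

end steps

/-! #### Graph part -/

lemma walk_step (k : ℕ) (hk : k = 7 ∨ k = 16 ∨ k = 20 ∨ k = 22) {n : ℕ}
    (K : LieSubalgebra ℝ (Matrix (Fin n → Fin 2) (Fin n → Fin 2) ℂ))
    {i j l : Fin n} (hij : i ≠ j) (hjl : j ≠ l) (hil : i ≠ l)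
    (h1 : ∀ p ∈ genSet k, Complex.I • twoLocal p.1 p.2 i j ∈ K)
    (h2 : ∀ p ∈ genSet k, Complex.I • twoLocal p.1 p.2 j l ∈ K) :
    ∀ p ∈ genSet k, Complex.I • twoLocal p.1 p.2 i l ∈ K := by
  rcases hk with rfl|rfl|rfl|rfl
  · exact step7 K hij hjl hil h1 h2
  · exact step16 K hij hjl hil h1 h2
  · exact step20 K hij hjl hil h1 h2
  · exact step22 K hij hjl hil h1 h2

lemma reach_mem (k : ℕ) (hk : k = 7 ∨ k = 16 ∨ k = 20 ∨ k = 22) {n : ℕ}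
    (G : SimpleGraph (Fin n)) {u v : Fin n} (w : G.Walk u v) :
    u ≠ v → ∀ p ∈ genSet k, Complex.I • twoLocal p.1 p.2 u v ∈ dla k G := by
  induction w with
  | nil => exact fun h => absurd rfl h
  | @cons a b c hadj p ih =>
    intro hac
    by_cases hbc : b = c
    · subst hbc
      exact fun q hq => LieSubalgebra.subset_lieSpan ⟨a, b, hadj, q, hq, rfl⟩
    · exact walk_step k hk _ hadj.ne hbc hac
        (fun q hq => LieSubalgebra.subset_lieSpan ⟨a, b, hadj, q, hq, rfl⟩) (ih hbc)

/-- For every `k ∈ {7, 16, 20, 22}` and every connected simple graph `G` on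
`{1, …, n}` with `n ≥ 3`, the dynamical Lie algebras of `G` and of the complete graph `K_n`
coincide: `𝔞_k^G = 𝔞_k^{K_n}`. -/
theorem dla_eq_dla_completeGraph_of_connected
    (n : ℕ) (hn : 3 ≤ n) (G : SimpleGraph (Fin n)) (hconn : G.Connected)
    (k : ℕ) (hk : k ∈ ({7, 16, 20, 22} : Set ℕ)) :
    dla k G = dla k (⊤ : SimpleGraph (Fin n)) := by
  have hk' : k = 7 ∨ k = 16 ∨ k = 20 ∨ k = 22 := hk
  apply le_antisymm
  · apply LieSubalgebra.lieSpan_le.mpr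
    rintro M ⟨i, j, hadj, q, hq, rfl⟩
    exact LieSubalgebra.subset_lieSpan
      ⟨i, j, (SimpleGraph.top_adj _ _).mpr hadj.ne, q, hq, rfl⟩
  · apply LieSubalgebra.lieSpan_le.mpr
    rintro M ⟨i, j, hadj, q, hq, rfl⟩
    have hne : i ≠ j := (SimpleGraph.top_adj _ _).mp hadj
    obtain ⟨w⟩ := hconn.preconnected i j
    exact reach_mem k hk' G w hne q hq
end
end

section
/- Let V₁ ⊆ {1,…,n} and let G₁ ⊆ G₂ and G₁' ⊆ G₂' be simple graphs on the vertex set {1,…,n} such that: every edge of G₁ and of G₁' has both endpoints in V₁; the edges of G₂ with both endpoints in V₁ are exactly the edges of G₁; the edges of G₂' with both endpoints in V₁ are exactly the edges of G₁'; and the edges of G₂ having at least one endpoint outside V₁ coincide with the edges of G₂' having at least one endpoint outside V₁. Then for any k ∈ {2,4,6,7,14,16,20,22}, if 𝔞_k^{G₁} = 𝔞_k^{G₁'} then 𝔞_k^{G₂} = 𝔞_k^{G₂'}. -/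
open Matrix DirectSum

noncomputable section

attribute [local instance] LieRing.ofAssociativeRing

lemma lieSpan_union_eq {R L : Type*} [CommRing R] [LieRing L] [LieAlgebra R L]
    (A T : Set L) :
    LieSubalgebra.lieSpan R L (A ∪ T) =
      LieSubalgebra.lieSpan R L (↑(LieSubalgebra.lieSpan R L A) ∪ T) := by
  apply le_antisymm
  · rw [LieSubalgebra.lieSpan_le]
    apply Set.union_subset
    · exact (LieSubalgebra.subset_lieSpan).trans
        ((Set.subset_union_left).trans LieSubalgebra.subset_lieSpan)
    · exact (Set.subset_union_right).trans LieSubalgebra.subset_lieSpan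
  · rw [LieSubalgebra.lieSpan_le]
    apply Set.union_subset
    · intro x hx
      exact LieSubalgebra.lieSpan_mono Set.subset_union_left hx
    · exact (Set.subset_union_right).trans LieSubalgebra.subset_lieSpan

/-- Locality of `k`-equivalence: if the subgraphs `G₁ ⊆ G₂` and `G₁' ⊆ G₂'`
agree outside `V₁`, are the respective restrictions of `G₂`, `G₂'` to `V₁`, and
`𝔞_k^{G₁} = 𝔞_k^{G₁'}`, then `𝔞_k^{G₂} = 𝔞_k^{G₂'}`. -/
theorem dla_eq_of_local_eq (n : ℕ) (V₁ : Set (Fin n))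
    (G₁ G₂ G₁' G₂' : SimpleGraph (Fin n))
    (hsub : G₁ ≤ G₂) (hsub' : G₁' ≤ G₂')
    (hG₁ : ∀ i j, G₁.Adj i j → i ∈ V₁ ∧ j ∈ V₁)
    (hG₁' : ∀ i j, G₁'.Adj i j → i ∈ V₁ ∧ j ∈ V₁)
    (hin : ∀ i j, i ∈ V₁ → j ∈ V₁ → (G₂.Adj i j ↔ G₁.Adj i j))
    (hin' : ∀ i j, i ∈ V₁ → j ∈ V₁ → (G₂'.Adj i j ↔ G₁'.Adj i j))
    (hout : ∀ i j, i ∉ V₁ ∨ j ∉ V₁ → (G₂.Adj i j ↔ G₂'.Adj i j))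
    (k : ℕ) (hk : k ∈ ({2, 4, 6, 7, 14, 16, 20, 22} : Set ℕ))
    (h : dla k G₁ = dla k G₁') :
    dla k G₂ = dla k G₂' := by
  classical
  set gen : SimpleGraph (Fin n) → Set (Matrix (Fin n → Fin 2) (Fin n → Fin 2) ℂ) :=
    fun G => {M | ∃ i j : Fin n, G.Adj i j ∧ ∃ p ∈ genSet k, M = Complex.I • twoLocal p.1 p.2 i j}
    with hgen
  set T : Set (Matrix (Fin n → Fin 2) (Fin n → Fin 2) ℂ) :=
    {M | ∃ i j : Fin n, (i ∉ V₁ ∨ j ∉ V₁) ∧ G₂.Adj i j ∧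
      ∃ p ∈ genSet k, M = Complex.I • twoLocal p.1 p.2 i j} with hT
  have h2 : gen G₂ = gen G₁ ∪ T := by
    ext M
    constructor
    · rintro ⟨i, j, hij, p, hp, hM⟩
      by_cases hi : i ∈ V₁
      · by_cases hj : j ∈ V₁
        · exact Or.inl ⟨i, j, (hin i j hi hj).mp hij, p, hp, hM⟩
        · exact Or.inr ⟨i, j, Or.inr hj, hij, p, hp, hM⟩
      · exact Or.inr ⟨i, j, Or.inl hi, hij, p, hp, hM⟩
    · rintro (⟨i, j, hij, p, hp, hM⟩ | ⟨i, j, _, hij, p, hp, hM⟩)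
      · exact ⟨i, j, hsub hij, p, hp, hM⟩
      · exact ⟨i, j, hij, p, hp, hM⟩
  have h2' : gen G₂' = gen G₁' ∪ T := by
    ext M
    constructor
    · rintro ⟨i, j, hij, p, hp, hM⟩
      by_cases hi : i ∈ V₁
      · by_cases hj : j ∈ V₁
        · exact Or.inl ⟨i, j, (hin' i j hi hj).mp hij, p, hp, hM⟩
        · exact Or.inr ⟨i, j, Or.inr hj, (hout i j (Or.inr hj)).mpr hij, p, hp, hM⟩
      · exact Or.inr ⟨i, j, Or.inl hi, (hout i j (Or.inl hi)).mpr hij, p, hp, hM⟩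
    · rintro (⟨i, j, hij, p, hp, hM⟩ | ⟨i, j, hor, hij, p, hp, hM⟩)
      · exact ⟨i, j, hsub' hij, p, hp, hM⟩
      · exact ⟨i, j, (hout i j hor).mp hij, p, hp, hM⟩
  show LieSubalgebra.lieSpan ℝ _ (gen G₂) = LieSubalgebra.lieSpan ℝ _ (gen G₂')
  rw [h2, h2', lieSpan_union_eq (gen G₁) T, lieSpan_union_eq (gen G₁') T]
  have : LieSubalgebra.lieSpan ℝ _ (gen G₁) = LieSubalgebra.lieSpan ℝ _ (gen G₁') := h
  rw [this]
end
end

section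
/- Let G be a connected bipartite simple graph with bipartition classes U and V satisfying |U| > 1 and |V| > 1, and suppose G has at least one vertex of degree > 2. Then G contains Σ as a subgraph: there exists an injective map f from {1,2,3,4,5} into the vertices of G such that {f(1),f(2)}, {f(2),f(3)}, {f(3),f(4)}, and {f(2),f(5)} are all edges of G. -/
open Matrix DirectSum

set_option maxHeartbeats 1000000
noncomputable section

/-- A connected bipartite simple graph with bipartition classes `U`, `V` of
sizes `> 1` and with a vertex of degree `> 2` contains the graph `Σ` as a subgraph, i.e., there
is an injective map `f` of the vertices `{1, …, 5}` of `Σ` into the vertices of `G` carrying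
the edges `{1,2}, {2,3}, {3,4}, {2,5}` of `Σ` to edges of `G`. -/
theorem sigma_subgraph_of_bipartite {α : Type} [Fintype α] [DecidableEq α]
    (G : SimpleGraph α) [DecidableRel G.Adj]
    (U V : Set α) (hpart : ∀ a, a ∈ U ↔ a ∉ V)
    (hbip : ∀ a b, G.Adj a b → (a ∈ U ∧ b ∈ V) ∨ (a ∈ V ∧ b ∈ U))
    (hU : 1 < U.ncard) (hV : 1 < V.ncard)
    (hconn : G.Connected) (hdeg : ∃ v, 2 < G.degree v) :
    ∃ f : Fin 5 → α, Function.Injective f ∧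
      G.Adj (f 0) (f 1) ∧ G.Adj (f 1) (f 2) ∧ G.Adj (f 2) (f 3) ∧ G.Adj (f 1) (f 4) := by
  obtain ⟨v, hdegv⟩ := hdeg
  -- adjacency flips membership in U
  have hop : ∀ a b, G.Adj a b → (a ∈ U ↔ b ∉ U) := by
    intro a b hab
    have hpa := hpart a
    have hpb := hpart b
    rcases hbip a b hab with ⟨ha, hb⟩ | ⟨ha, hb⟩ <;> tauto
  -- find u ≠ v in the same class as v
  have hsame : ∃ u, u ≠ v ∧ (u ∈ U ↔ v ∈ U) := by
    by_cases hv : v ∈ U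
    · obtain ⟨u, hu, hne⟩ := Set.exists_ne_of_one_lt_ncard hU v
      exact ⟨u, hne, by simp [hu, hv]⟩
    · obtain ⟨u, hu, hne⟩ := Set.exists_ne_of_one_lt_ncard hV v
      have hu' : u ∉ U := fun h => (hpart u).mp h hu
      exact ⟨u, hne, by simp [hu', hv]⟩
  obtain ⟨u, huv, hclass⟩ := hsame
  have hnadj : ¬ G.Adj v u := fun h => by have := hop v u h; tauto
  -- find x, y with v ~ x ~ y and y ≠ v
  have hxy : ∃ x y, G.Adj v x ∧ G.Adj x y ∧ y ≠ v := by
    obtain ⟨w⟩ := hconn.preconnected v u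
    obtain ⟨p, hp⟩ : ∃ p : G.Walk v u, p.IsPath := ⟨w.toPath.1, w.toPath.2⟩
    cases p with
    | nil => exact absurd rfl huv.symm
    | cons h q =>
      rename_i x
      have hq : q.IsPath ∧ v ∉ q.support := (SimpleGraph.Walk.cons_isPath_iff _ _).mp hp
      cases q with
      | nil => exact absurd h hnadj
      | cons h2 r =>
        rename_i y
        refine ⟨x, y, h, h2, fun hyv => ?_⟩
        apply hq.2
        rw [← hyv]
        exact List.mem_cons_of_mem _ r.start_mem_support
  obtain ⟨x, y, hvx, hxyadj, hyv⟩ := hxy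
  -- two more neighbors of v
  have hxmem : x ∈ G.neighborFinset v := (SimpleGraph.mem_neighborFinset _ _ _).mpr hvx
  have hcard : 1 < ((G.neighborFinset v).erase x).card := by
    have := Finset.card_erase_of_mem hxmem
    have hd : G.degree v = (G.neighborFinset v).card := rfl
    omega
  obtain ⟨a, ha, b, hb, hab⟩ := Finset.one_lt_card.mp hcard
  have hax : a ≠ x := Finset.ne_of_mem_erase ha
  have hbx : b ≠ x := Finset.ne_of_mem_erase hb
  have hva : G.Adj v a := (SimpleGraph.mem_neighborFinset _ _ _).mp (Finset.mem_of_mem_erase ha)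
  have hvb : G.Adj v b := (SimpleGraph.mem_neighborFinset _ _ _).mp (Finset.mem_of_mem_erase hb)
  have hav : a ≠ v := fun h => G.irrefl (h ▸ hva)
  have hbv : b ≠ v := fun h => G.irrefl (h ▸ hvb)
  have hxv : x ≠ v := fun h => G.irrefl (h ▸ hvx)
  have hxy' : x ≠ y := fun h => G.irrefl (h ▸ hxyadj)
  -- y is in the same class as v, a and b are in the other class
  have h1 := hop v x hvx
  have h2 := hop x y hxyadj
  have h3 := hop v a hva
  have h4 := hop v b hvb
  have hya : y ≠ a := fun h => by subst h; tauto
  have hyb : y ≠ b := fun h => by subst h; tauto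
  refine ⟨![a, v, x, y, b], ?_, ?_, ?_, ?_, ?_⟩
  · intro i j hij
    fin_cases i <;> fin_cases j <;> simp_all
  · simpa using hva.symm
  · simpa using hvx
  · simpa using hxyadj
  · simpa using hvb
end
end
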